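/- Let α, β be elements of ℤ[i] with β ≠ 0 that generate the unit ideal of ℤ[i], and define integers a, b by a + bi = α·β̄. Set q = |α|² + |β|² − a − b. Then q ≥ 1, the point ((a−b)/q, (a+b−|β|²)/q, (|α|²−a−b)/q) lies on 𝐒²_I = {(x₁,x₂,x₃) ∈ ℝ³ : x₁²+x₂²+x₃² = 1}, and gcd(a−b, a+b−|β|², |α|²−a−b, q) = 1; consequently this rational point of 𝐒²_I has height q = |α|² + |β|² − a − b. -/

import Mathlib

lemma onePlusI_dvd {z : GaussianInt} (h : (2:ℤ) ∣ Zsqrtd.norm z) : (⟨1,1⟩ : GaussianInt) ∣ z := by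
  have key : ∀ x y : ZMod 2, x*x + y*y = x + y := by decide
  have h2 : (2:ℤ) ∣ z.re + z.im := by
    have h0 : ((Zsqrtd.norm z : ℤ) : ZMod 2) = 0 :=
      (ZMod.intCast_zmod_eq_zero_iff_dvd _ 2).mpr h
    rw [Zsqrtd.norm_def] at h0
    have h1 : ((z.re + z.im : ℤ) : ZMod 2) = 0 := by
      push_cast at h0 ⊢; rw [← key]; linear_combination h0
    exact_mod_cast (ZMod.intCast_zmod_eq_zero_iff_dvd _ 2).mp h1
  obtain ⟨c, hc⟩ := h2
  refine ⟨⟨c, c - z.re⟩, ?_⟩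
  ext <;> simp [Zsqrtd.re_mul, Zsqrtd.im_mul] <;> omega


/-- Points of `ℝ^l` with all coordinates rational. -/
def ratPts (l : ℕ) : Set (EuclideanSpace ℝ (Fin l)) := {v | ∀ i, ∃ q : ℚ, v i = (q : ℝ)}

/-- The height of a rational point of a sphere: writing it as `𝐩/q` with `𝐩 ∈ ℤ^l`,
`q ≥ 1`, `gcd(p₁,…,p_l,q) = 1`, the height is `q`, which equals the lcm of the
denominators of the rational coordinates. -/
noncomputable def heightVec {l : ℕ} (v : EuclideanSpace ℝ (Fin l)) : ℝ :=
  letI := Classical.dec (∀ i, ∃ q : ℚ, v i = (q : ℝ))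
  if h : ∀ i, ∃ q : ℚ, v i = (q : ℝ) then
    ((Finset.univ.lcm fun i => (h i).choose.den : ℕ) : ℝ)
  else 1

/-- The sphere `𝐒²_I = {(x₁,x₂,x₃) ∈ ℝ³ : x₁² + x₂² + x₃² = 1}`. -/
def S2I : Set (EuclideanSpace ℝ (Fin 3)) := {v | v 0 ^ 2 + v 1 ^ 2 + v 2 ^ 2 = 1}

/-- Heights of rational points of `𝐒²_I` coming from `ℚ(i)`.  Let `α, β ∈ ℤ[i]`,
`β ≠ 0`, generate the unit ideal, put `a + bi = α·β̄` and `q = |α|² + |β|² − a − b`.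
Then `q ≥ 1`, the point `((a−b)/q, (a+b−|β|²)/q, (|α|²−a−b)/q)` lies on `𝐒²_I`,
`gcd(a−b, a+b−|β|², |α|²−a−b, q) = 1`, and this rational point has height `q`. -/
theorem height_S2I_point (α β : GaussianInt) (hβ : β ≠ 0) (hco : IsCoprime α β)
    (a b q : ℤ) (ha : a = (α * star β).re) (hb : b = (α * star β).im)
    (hq : q = Zsqrtd.norm α + Zsqrtd.norm β - a - b) :
    1 ≤ q ∧
    Int.gcd (Int.gcd (Int.gcd (a - b) (a + b - Zsqrtd.norm β)) (Zsqrtd.norm α - a - b))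
      q = 1 ∧
    ∀ v : EuclideanSpace ℝ (Fin 3),
      v 0 = ((a - b : ℤ) : ℝ) / (q : ℝ) →
      v 1 = ((a + b - Zsqrtd.norm β : ℤ) : ℝ) / (q : ℝ) →
      v 2 = ((Zsqrtd.norm α - a - b : ℤ) : ℝ) / (q : ℝ) →
      v ∈ S2I ∩ ratPts 3 ∧ heightVec v = (q : ℝ) := by
  have hq1 : 1 ≤ q := by
    have ha' : a = α.re * β.re + α.im * β.im := by
      rw [ha]; simp [Zsqrtd.re_mul]
    have hb' : b = α.im * β.re - α.re * β.im := by
      rw [hb]; simp [Zsqrtd.im_mul]; ring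
    rw [Zsqrtd.norm_def, Zsqrtd.norm_def] at hq
    by_contra hc
    push_neg at hc
    set x := α.re; set y := α.im; set u := β.re; set v := β.im
    have h1 : x - u = 0 := by nlinarith [sq_nonneg (x-u), sq_nonneg (y-v), sq_nonneg (x+v), sq_nonneg (y-u)]
    have h2 : y - v = 0 := by nlinarith [sq_nonneg (x-u), sq_nonneg (y-v), sq_nonneg (x+v), sq_nonneg (y-u)]
    have h3 : x + v = 0 := by nlinarith [sq_nonneg (x-u), sq_nonneg (y-v), sq_nonneg (x+v), sq_nonneg (y-u)]
    have h4 : y - u = 0 := by nlinarith [sq_nonneg (x-u), sq_nonneg (y-v), sq_nonneg (x+v), sq_nonneg (y-u)]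
    apply hβ
    have hu : u = 0 := by omega
    have hv : v = 0 := by omega
    ext <;> assumption
  have hgcd : Int.gcd (Int.gcd (Int.gcd (a - b) (a + b - Zsqrtd.norm β)) (Zsqrtd.norm α - a - b)) q = 1 := by
    set N := Zsqrtd.norm α with hN
    set M := Zsqrtd.norm β with hM
    set g : ℕ := Int.gcd (Int.gcd (Int.gcd (a - b) (a + b - M)) (N - a - b)) q with hgdef
    by_contra hgne
    -- basic divisibilities
    have d1 : (g:ℤ) ∣ a - b :=
      ((Int.gcd_dvd_left _ _).trans (Int.gcd_dvd_left _ _)).trans (Int.gcd_dvd_left _ _)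
    have d2 : (g:ℤ) ∣ a + b - M :=
      ((Int.gcd_dvd_left _ _).trans (Int.gcd_dvd_left _ _)).trans (Int.gcd_dvd_right _ _)
    have d3 : (g:ℤ) ∣ N - a - b := (Int.gcd_dvd_left _ _).trans (Int.gcd_dvd_right _ _)
    have d4 : (g:ℤ) ∣ q := Int.gcd_dvd_right _ _
    have dM : (g:ℤ) ∣ M := by have := d4.sub d3; rwa [show q - (N - a - b) = M by rw [hq]; ring] at this
    have dN : (g:ℤ) ∣ N := by have := d4.add d2; rwa [show q + (a + b - M) = N by rw [hq]; ring] at this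
    have d2a : (g:ℤ) ∣ 2 * a := by
      have := (d1.add d2).add dM; rwa [show a - b + (a + b - M) + M = 2 * a by ring] at this
    have d2b : (g:ℤ) ∣ 2 * b := by
      have := (d2.add dM).sub d1; rwa [show a + b - M + M - (a - b) = 2 * b by ring] at this
    obtain ⟨p, hp, hpg⟩ := Nat.exists_prime_and_dvd hgne
    have hpZ : (p:ℤ) ∣ (g:ℤ) := Int.natCast_dvd_natCast.mpr hpg
    have pM : (p:ℤ) ∣ M := hpZ.trans dM
    have pN : (p:ℤ) ∣ N := hpZ.trans dN
    rcases hp.eq_two_or_odd' with h2 | hodd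
    · -- p = 2 : (1+i) divides α and β
      subst h2
      have u1 : IsUnit (⟨1,1⟩ : GaussianInt) :=
        hco.isUnit_of_dvd' (onePlusI_dvd (by exact_mod_cast pN)) (onePlusI_dvd (by exact_mod_cast pM))
      have := Zsqrtd.norm_eq_one_iff.mpr u1
      rw [Zsqrtd.norm_def] at this
      norm_num at this
    · -- p odd
      have hp2 : (p:ℤ) ≠ 2 := by
        intro h; exact (Nat.not_even_iff_odd.mpr hodd) (by exact_mod_cast h ▸ even_two)
      have hpprime : Prime (p:ℤ) := Nat.prime_iff_prime_int.mp hp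
      have hnd2 : ¬ (p:ℤ) ∣ 2 := by
        intro h
        have h' : p ∣ 2 := by exact_mod_cast h
        have := (Nat.prime_dvd_prime_iff_eq hp Nat.prime_two).mp h'
        rw [this] at hodd
        have := Nat.odd_iff.mp hodd
        omega
      have pa : (p:ℤ) ∣ a := (hpprime.dvd_mul.mp (hpZ.trans d2a)).resolve_left hnd2
      have pb : (p:ℤ) ∣ b := (hpprime.dvd_mul.mp (hpZ.trans d2b)).resolve_left hnd2
      have pαβ : ((p:ℤ) : GaussianInt) ∣ α * star β := by
        rw [Zsqrtd.intCast_dvd]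
        exact ⟨ha ▸ pa, hb ▸ pb⟩
      have pβα : ((p:ℤ) : GaussianInt) ∣ β * star α := by
        have hst : β * star α = star (α * star β) := by rw [star_mul, star_star]
        rw [hst, Zsqrtd.intCast_dvd]
        refine ⟨?_, ?_⟩
        · rw [Zsqrtd.re_star]; exact ha ▸ pa
        · rw [Zsqrtd.im_star]; exact dvd_neg.mpr (hb ▸ pb)
      have pαα : ((p:ℤ) : GaussianInt) ∣ α * star α := by
        rw [← Zsqrtd.norm_eq_mul_conj]
        exact (Zsqrtd.intCast_dvd_intCast _ _).mpr pN
      have pββ : ((p:ℤ) : GaussianInt) ∣ β * star β := by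
        rw [← Zsqrtd.norm_eq_mul_conj]
        exact (Zsqrtd.intCast_dvd_intCast _ _).mpr pM
      obtain ⟨γ, δ, hbez⟩ := hco
      have psα : ((p:ℤ) : GaussianInt) ∣ star α := by
        have : star α = γ * (α * star α) + δ * (β * star α) := by
          calc star α = (γ * α + δ * β) * star α := by rw [hbez, one_mul]
          _ = γ * (α * star α) + δ * (β * star α) := by ring
        rw [this]; exact dvd_add (pαα.mul_left γ) (pβα.mul_left δ)
      have psβ : ((p:ℤ) : GaussianInt) ∣ star β := by
        have : star β = γ * (α * star β) + δ * (β * star β) := by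
          calc star β = (γ * α + δ * β) * star β := by rw [hbez, one_mul]
          _ = γ * (α * star β) + δ * (β * star β) := by ring
        rw [this]; exact dvd_add (pαβ.mul_left γ) (pββ.mul_left δ)
      have pα : ((p:ℤ) : GaussianInt) ∣ α := by
        obtain ⟨w, hw⟩ := psα
        exact ⟨star w, by rw [← star_star α, hw, star_mul, star_intCast]; ring⟩
      have pβ : ((p:ℤ) : GaussianInt) ∣ β := by
        obtain ⟨w, hw⟩ := psβ
        exact ⟨star w, by rw [← star_star β, hw, star_mul, star_intCast]; ring⟩
      have u1 : IsUnit (((p:ℤ)) : GaussianInt) := (IsCoprime.isUnit_of_dvd' ⟨γ, δ, hbez⟩ pα pβ)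
      have h1 := Zsqrtd.norm_eq_one_iff.mpr u1
      rw [Zsqrtd.norm_intCast] at h1
      have hple := hp.two_le
      rw [Int.natAbs_mul] at h1
      simp only [Int.natAbs_natCast] at h1
      nlinarith
  refine ⟨hq1, hgcd, ?_⟩
  set N := Zsqrtd.norm α with hN
  set M := Zsqrtd.norm β with hM
  have hab : a ^ 2 + b ^ 2 = N * M := by
    have h1 : Zsqrtd.norm (α * star β) = N * M := by
      rw [Zsqrtd.norm_mul, Zsqrtd.norm_conj]
    rw [Zsqrtd.norm_def] at h1
    rw [← ha, ← hb] at h1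
    linear_combination h1
  have hq0 : q ≠ 0 := by omega
  have hqR : (0:ℝ) < (q:ℝ) := by exact_mod_cast lt_of_lt_of_le one_pos hq1
  have hqRne : (q:ℝ) ≠ 0 := ne_of_gt hqR
  intro v hv0 hv1 hv2
  have hsph : v ∈ S2I := by
    show v 0 ^ 2 + v 1 ^ 2 + v 2 ^ 2 = 1
    rw [hv0, hv1, hv2]
    have keyZ : (a-b)^2 + (a+b-M)^2 + (N-a-b)^2 = q^2 := by
      rw [hq]; linear_combination 2 * hab
    have keyR : ((a-b:ℤ):ℝ)^2 + ((a+b-M:ℤ):ℝ)^2 + ((N-a-b:ℤ):ℝ)^2 = ((q:ℤ):ℝ)^2 := by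
      exact_mod_cast congrArg (fun t : ℤ => (t : ℝ)) keyZ
    field_simp
    push_cast at keyR ⊢
    linarith [keyR]
  set p : Fin 3 → ℤ := ![a-b, a+b-M, N-a-b] with hpdef
  set r : Fin 3 → ℚ := fun i => (p i : ℚ) / (q : ℚ) with hrdef
  have hvr : ∀ i, v i = ((r i : ℚ) : ℝ) := by
    intro i
    fin_cases i
    · show v 0 = _; rw [hv0]; simp [hrdef, hpdef]
    · show v 1 = _; rw [hv1]; simp [hrdef, hpdef]
    · show v 2 = _; rw [hv2]; simp [hrdef, hpdef]
  have hrat : v ∈ ratPts 3 := fun i => ⟨r i, hvr i⟩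
  refine ⟨⟨hsph, hrat⟩, ?_⟩
  have hrat' : ∀ i : Fin 3, ∃ s : ℚ, v i = (s : ℝ) := hrat
  unfold heightVec
  rw [dif_pos hrat']
  have hden : ∀ i, (hrat' i).choose = r i := by
    intro i
    have h1 : (((hrat i).choose : ℚ) : ℝ) = ((r i : ℚ) : ℝ) := by
      rw [← (hrat' i).choose_spec, hvr i]
    exact_mod_cast h1
  have hdeneq : (fun i => (hrat' i).choose.den) = fun i => (r i).den := by
    funext i; rw [hden i]
  rw [hdeneq]
  set L : ℕ := Finset.univ.lcm (fun i => (r i).den) with hLdef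
  have hdvdq : ∀ i, (r i).den ∣ q.natAbs := by
    intro i
    have h1 : r i = Rat.divInt (p i) q := by rw [Rat.divInt_eq_div]
    have h2 := Rat.den_dvd (p i) q
    rw [← h1] at h2
    exact Int.ofNat_dvd_right.mp (Int.dvd_natAbs.mpr h2)
  have hLq : L ∣ q.natAbs := Finset.lcm_dvd fun i _ => hdvdq i
  have hcross : ∀ i, q ∣ p i * ((r i).den : ℤ) := by
    intro i
    have h1 : (r i) * (q:ℚ) = (p i : ℚ) := by
      rw [hrdef]; field_simp
    have hden0 : (((r i).den : ℚ)) ≠ 0 := by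
      exact_mod_cast (r i).den_nz
    have h2 : ((r i).num : ℚ) = r i * ((r i).den : ℚ) := (div_eq_iff hden0).mp (Rat.num_div_den (r i))
    have h3 : ((r i).num : ℚ) * (q:ℚ) = (p i : ℚ) * ((r i).den : ℚ) := by
      rw [h2]; rw [mul_right_comm, h1]
    have h4 : (r i).num * q = p i * ((r i).den : ℤ) := by exact_mod_cast h3
    exact ⟨(r i).num, by rw [← h4]; ring⟩
  have hLd : ∀ i, ((r i).den : ℤ) ∣ (L : ℤ) :=
    fun i => Int.natCast_dvd_natCast.mpr (Finset.dvd_lcm (Finset.mem_univ i))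
  have hqpL : ∀ i, q ∣ p i * (L:ℤ) := fun i => (hcross i).trans (mul_dvd_mul_left _ (hLd i))
  have hbig : q ∣ ((Int.gcd ((Int.gcd ((Int.gcd (p 0 * (L:ℤ)) (p 1 * (L:ℤ)) : ℕ) : ℤ)
      (p 2 * (L:ℤ)) : ℕ) : ℤ) (q * (L:ℤ)) : ℕ) : ℤ) :=
    Int.dvd_coe_gcd (Int.dvd_coe_gcd (Int.dvd_coe_gcd (hqpL 0) (hqpL 1)) (hqpL 2)) (Dvd.intro L rfl)
  simp only [Int.gcd_mul_right, Int.natAbs_natCast, Nat.cast_mul, Int.natCast_natAbs] at hbig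
  have hp0 : p 0 = a - b := rfl
  have hp1 : p 1 = a + b - M := rfl
  have hp2 : p 2 = N - a - b := rfl
  rw [hp0, hp1, hp2] at hbig
  rw [hgcd] at hbig
  simp only [Nat.cast_one, one_mul] at hbig
  have hqL : q.natAbs ∣ L := by
    have := Int.natAbs_dvd_natAbs.mpr hbig
    simpa using this
  have hLeq : L = q.natAbs := Nat.dvd_antisymm hLq hqL
  rw [hLeq]
  rw [Nat.cast_natAbs, abs_of_nonneg (by omega : (0:ℤ) ≤ q)]
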